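/- If D is heavy-tailed (for all γ>0, e^{γt}P[D>t] → ∞) and L is light-tailed (there exists γ>0 with limsup e^{γt}P[L>t] < ∞), then D has a P-tail heavier than L, i.e., there exists z_0 with P[D>z] ≥ P[L>z] for all z ≥ z_0; consequently E[T^R] = E[T^C] = ∞. -/

import Mathlib

open MeasureTheory ProbabilityTheory Filter Set Real
open scoped ENNReal NNReal

/-- If `D` is heavy-tailed and `L` is light-tailed, then `D` has a
`P`-tail heavier than `L`, and consequently `E[T^R] = E[T^C] = ∞`. -/
theorem restart_checkpoint_infinite_of_heavy_light
    {Ω : Type*} [MeasurableSpace Ω] (P : Measure Ω) [IsProbabilityMeasure P]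
    (D L0 : Ω → ℝ) (L : ℕ → Ω → ℝ)
    (hDmeas : Measurable D) (hL0meas : Measurable L0) (hLmeas : ∀ n, Measurable (L n))
    (hDnn : ∀ ω, 0 ≤ D ω) (hL0nn : ∀ ω, 0 ≤ L0 ω) (hLnn : ∀ n ω, 0 ≤ L n ω)
    (hDint : Integrable D P) (hL0int : Integrable L0 P)
    (hDsupp : ∀ x : ℝ, 0 ≤ x → 0 < P {ω | x < D ω})
    (hLsupp : ∀ x : ℝ, 0 ≤ x → 0 < P {ω | x < L0 ω})
    (hid : ∀ n, IdentDistrib (L n) L0 P P)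
    (hindep : iIndepFun
        (fun i => Option.elim i D L) P)
    (τ : Ω → ℕ) (hτ : ∀ ω, τ ω = sInf {k : ℕ | D ω < L k ω})
    (TR : Ω → ℝ) (hTR : ∀ ω, TR ω = (∑ i ∈ Finset.range (τ ω), L i ω) + D ω)
    (TC : Ω → ℝ) (hTC : ∀ ω, TC ω = ∑ i ∈ Finset.range (τ ω + 1), L i ω)
    -- D is heavy-tailed
    (hheavy : ∀ γ : ℝ, 0 < γ →
        Tendsto (fun t : ℝ => exp (γ * t) * (P {ω | t < D ω}).toReal) atTop atTop)
    -- L is light-tailed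
    (hlight : ∃ γ : ℝ, 0 < γ ∧ ∃ C : ℝ,
        ∀ᶠ t : ℝ in atTop, exp (γ * t) * (P {ω | t < L0 ω}).toReal ≤ C) :
    (∃ z₀ : ℝ, ∀ z ≥ z₀, P {ω | z < L0 ω} ≤ P {ω | z < D ω})
      ∧ ∫⁻ ω, ENNReal.ofReal (TR ω) ∂P = ⊤
      ∧ ∫⁻ ω, ENNReal.ofReal (TC ω) ∂P = ⊤ := by
  obtain ⟨γ, hγ, C0, hC0⟩ := hlight
  set C : ℝ := max C0 1 with hCdef
  have hC1 : (1 : ℝ) ≤ C := le_max_right _ _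
  have hCpos : (0 : ℝ) < C := lt_of_lt_of_le one_pos hC1
  have hC' : ∀ᶠ t : ℝ in atTop, exp (γ * t) * (P {ω | t < L0 ω}).toReal ≤ C :=
    hC0.mono fun t ht => ht.trans (le_max_left _ _)
  -- Part 1 : tail comparison
  have hcomp : ∃ z₀ : ℝ, ∀ z ≥ z₀, P {ω | z < L0 ω} ≤ P {ω | z < D ω} := by
    have h1 := (hheavy γ hγ).eventually_ge_atTop C
    obtain ⟨z₀, hz⟩ := (h1.and hC').exists_forall_of_atTop
    refine ⟨z₀, fun z hzz => ?_⟩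
    obtain ⟨hD, hL⟩ := hz z hzz
    have hexp : (0 : ℝ) < exp (γ * z) := exp_pos _
    have hle : (P {ω | z < L0 ω}).toReal ≤ (P {ω | z < D ω}).toReal :=
      le_of_mul_le_mul_left (hL.trans hD) hexp
    exact (ENNReal.toReal_le_toReal (measure_ne_top _ _) (measure_ne_top _ _)).mp hle
  refine ⟨hcomp, ?_⟩
  -- the common lower-bound quantity
  set S : Ω → ℝ := fun ω => ∑ i ∈ Finset.range (τ ω), L i ω with hSdef
  have hSnn : ∀ ω, 0 ≤ S ω := fun ω => Finset.sum_nonneg fun i _ => hLnn i ω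
  -- It suffices to prove that the lintegral of S is infinite.
  suffices hIS : ∫⁻ ω, ENNReal.ofReal (S ω) ∂P = ⊤ by
    constructor
    · refine eq_top_iff.mpr ?_
      rw [← hIS]
      refine lintegral_mono fun ω => ENNReal.ofReal_le_ofReal ?_
      rw [hTR ω]
      exact le_add_of_nonneg_right (hDnn ω)
    · refine eq_top_iff.mpr ?_
      rw [← hIS]
      refine lintegral_mono fun ω => ENNReal.ofReal_le_ofReal ?_
      rw [hTC ω, Finset.sum_range_succ]
      exact le_add_of_nonneg_right (hLnn _ ω)
  -- the bad event where no attempt ever succeeds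
  set N : Set Ω := ⋂ k, {ω | L k ω ≤ D ω} with hNdef
  have hNmeas : MeasurableSet N :=
    MeasurableSet.iInter fun k => measurableSet_le (hLmeas k) hDmeas
  -- the distribution function of L
  have hFL : ∀ (t : ℝ) (k : ℕ), P (L k ⁻¹' Iic t) = P (L0 ⁻¹' Iic t) := fun t k =>
    (hid k).measure_mem_eq measurableSet_Iic
  have hFLone : ∀ t : ℝ, P (L0 ⁻¹' Iic t) = 1 - P {ω | t < L0 ω} := by
    intro t
    have : L0 ⁻¹' Iic t = {ω | t < L0 ω}ᶜ := by
      ext ω; simp [Set.mem_preimage, Set.mem_Iic, not_lt]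
    rw [this, measure_compl (measurableSet_lt measurable_const hL0meas) (measure_ne_top _ _), measure_univ]
  -- `N` is a null set
  have hN : P N = 0 := by
    have key : ∀ t' : ℝ, 0 ≤ t' → P N ≤ P {ω | t' < D ω} := by
      intro t' ht'
      have hprod : ∀ n : ℕ,
          P (⋂ k, {ω | L k ω ≤ D ω} : Set Ω) ≤
            P {ω | t' < D ω} + (P (L0 ⁻¹' Iic t')) ^ (n + 1) := by
        intro n
        have hmeasure : P (⋂ j ∈ (Finset.range (n + 1)).image some,
              (fun i => Option.elim i D L) j ⁻¹' Iic t') = (P (L0 ⁻¹' Iic t')) ^ (n + 1) := by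
          rw [hindep.measure_inter_preimage_eq_mul ((Finset.range (n + 1)).image some)
            (fun _ _ => measurableSet_Iic)]
          rw [Finset.prod_image (by intro a _ b _ h; exact Option.some_injective _ h)]
          simp only [Option.elim_some]
          rw [Finset.prod_congr rfl fun k _ => hFL t' k, Finset.prod_const, Finset.card_range]
        have hsub : (⋂ k, {ω | L k ω ≤ D ω} : Set Ω) ⊆
            {ω | t' < D ω} ∪ (⋂ j ∈ (Finset.range (n + 1)).image some,
              (fun i => Option.elim i D L) j ⁻¹' Iic t') := by
          intro ω hω
          by_cases hD : t' < D ω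
          · exact Or.inl hD
          · refine Or.inr ?_
            simp only [Set.mem_iInter, Finset.mem_image, Finset.mem_range]
            rintro j ⟨k, hk, rfl⟩
            have h1 : L k ω ≤ D ω := Set.mem_iInter.mp hω k
            have h2 : D ω ≤ t' := not_lt.mp hD
            exact Set.mem_preimage.mpr (Set.mem_Iic.mpr (h1.trans h2))
        calc P (⋂ k, {ω | L k ω ≤ D ω} : Set Ω) ≤ _ := measure_mono hsub
          _ ≤ _ := measure_union_le _ _
          _ = _ := by rw [hmeasure]
      have hFlt : P (L0 ⁻¹' Iic t') < 1 := by
        rw [hFLone t']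
        exact ENNReal.sub_lt_self ENNReal.one_ne_top one_ne_zero (hLsupp t' ht').ne'
      have hlim : Tendsto (fun n : ℕ => P {ω | t' < D ω} + (P (L0 ⁻¹' Iic t')) ^ (n + 1))
          atTop (nhds (P {ω | t' < D ω})) := by
        have h0 : Tendsto (fun n : ℕ => (P (L0 ⁻¹' Iic t')) ^ (n + 1)) atTop (nhds 0) := by
          have := (ENNReal.tendsto_pow_atTop_nhds_zero_of_lt_one hFlt).comp
            (tendsto_add_atTop_nat 1)
          exact this
        have h1 := Tendsto.add (tendsto_const_nhds
          (x := P {ω | t' < D ω}) (f := atTop (α := ℕ))) h0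
        simpa using h1
      exact ge_of_tendsto' hlim (fun n => hprod n)
    have hlimD : Tendsto (fun n : ℕ => P {ω | (n : ℝ) < D ω}) atTop (nhds 0) := by
      have hempty : (⋂ n : ℕ, {ω | (n : ℝ) < D ω}) = (∅ : Set Ω) := by
        ext ω
        simp only [Set.mem_iInter, Set.mem_setOf_eq, Set.mem_empty_iff_false, iff_false, not_forall,
          not_lt]
        obtain ⟨n, hn⟩ := exists_nat_ge (D ω)
        exact ⟨n, hn⟩
      have := tendsto_measure_iInter_atTop (μ := P)
        (s := fun n : ℕ => {ω | (n : ℝ) < D ω})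
        (fun n => (measurableSet_lt measurable_const hDmeas).nullMeasurableSet)
        (fun n m hnm ω hω => show (n : ℝ) < D ω from lt_of_le_of_lt (Nat.cast_le.mpr hnm) hω)
        ⟨0, measure_ne_top _ _⟩
      rwa [hempty, measure_empty] at this
    have : P N ≤ 0 := ge_of_tendsto' hlimD (fun n => key n (Nat.cast_nonneg n))
    exact le_antisymm this zero_le
  -- Main lower bound : for every t ≥ 1,
  have main : ∀ t : ℝ, 1 ≤ t →
      P {ω | t < D ω} * (P {ω | 1 < L0 ω} - P {ω | t < L0 ω}) * (P {ω | t < L0 ω})⁻¹ ≤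
        ∫⁻ ω, ENNReal.ofReal (S ω) ∂P := by
    intro t ht
    set sets : ℕ → Option ℕ → Set ℝ := fun i j =>
      Option.elim j (Ioi t) (fun k => if k = i then Ioc 1 t else Iic t) with hsetsdef
    set Efam : ℕ → Set Ω := fun i =>
      ⋂ j ∈ insert none ((Finset.range (i + 1)).image some),
        (fun i => Option.elim i D L) j ⁻¹' sets i j with hEdef
    have hsetsmeas : ∀ i j, MeasurableSet (sets i j) := by
      intro i j
      cases j with
      | none => exact measurableSet_Ioi
      | some k =>
        simp only [hsetsdef, Option.elim]
        split_ifs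
        · exact measurableSet_Ioc
        · exact measurableSet_Iic
    have hEmeas : ∀ i, MeasurableSet (Efam i) := by
      intro i
      refine Finset.measurableSet_biInter _ fun j _ => ?_
      cases j with
      | none => exact hDmeas (hsetsmeas i none)
      | some k => exact (hLmeas k) (hsetsmeas i (some k))
    -- probability of the good events
    have hPE : ∀ i : ℕ, P (Efam i) =
        P {ω | t < D ω} * (P (L0 ⁻¹' Ioc 1 t) * (P (L0 ⁻¹' Iic t)) ^ i) := by
      intro i
      rw [hEdef]
      rw [hindep.measure_inter_preimage_eq_mul (insert none ((Finset.range (i + 1)).image some))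
        (fun j _ => hsetsmeas i j)]
      rw [Finset.prod_insert (by simp)]
      rw [Finset.prod_image (by intro a _ b _ h; exact Option.some_injective _ h)]
      have h1 : (fun i => Option.elim i D L) none ⁻¹' sets i none = {ω | t < D ω} := by
        ext ω; simp [hsetsdef, Set.mem_preimage, Set.mem_Ioi]
      rw [h1]
      congr 1
      rw [Finset.prod_range_succ]
      have h2 : ∀ k ∈ Finset.range i,
          P ((fun i => Option.elim i D L) (some k) ⁻¹' sets i (some k)) = P (L0 ⁻¹' Iic t) := by
        intro k hk
        have hki : k ≠ i := Nat.ne_of_lt (Finset.mem_range.mp hk)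
        have : sets i (some k) = Iic t := by simp [hsetsdef, hki]
        rw [this]
        exact hFL t k
      rw [Finset.prod_congr rfl h2, Finset.prod_const, Finset.card_range]
      have h3 : sets i (some i) = Ioc 1 t := by simp [hsetsdef]
      rw [h3]
      have h4 : P ((fun i => Option.elim i D L) (some i) ⁻¹' Ioc 1 t) = P (L0 ⁻¹' Ioc 1 t) :=
        (hid i).measure_mem_eq measurableSet_Ioc
      rw [h4, mul_comm]
    -- on the good event minus N, τ is large and L i is at least 1
    have hEsub : ∀ i ω, ω ∈ Efam i \ N → i < τ ω ∧ 1 < L i ω := by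
      intro i ω hω
      obtain ⟨hωE, hωN⟩ := hω
      simp only [hEdef, Set.mem_iInter] at hωE
      have hD : t < D ω := by
        have := hωE none (Finset.mem_insert_self _ _)
        simpa [hsetsdef] using this
      have hk : ∀ k, k ≤ i → L k ω ≤ t := by
        intro k hki
        have hmem : (some k) ∈ insert none ((Finset.range (i + 1)).image some) := by
          simp [Finset.mem_insert, Finset.mem_image, Nat.lt_succ_iff, hki]
        have := hωE (some k) hmem
        simp only [hsetsdef, Option.elim, Set.mem_preimage] at this
        by_cases hkeq : k = i
        · rw [if_pos hkeq] at this; exact this.2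
        · rw [if_neg hkeq] at this; exact this
      have hLi : 1 < L i ω := by
        have hmem : (some i) ∈ insert none ((Finset.range (i + 1)).image some) := by
          simp [Finset.mem_insert, Finset.mem_image, Nat.lt_succ_iff]
        have := hωE (some i) hmem
        simp only [hsetsdef, Option.elim, Set.mem_preimage, if_pos] at this
        exact this.1
      refine ⟨?_, hLi⟩
      have hne : {k : ℕ | D ω < L k ω}.Nonempty := by
        by_contra hcon
        rw [Set.not_nonempty_iff_eq_empty] at hcon
        apply hωN
        rw [hNdef]
        refine Set.mem_iInter.mpr fun k => ?_
        have : k ∉ {k : ℕ | D ω < L k ω} := by rw [hcon]; exact Set.notMem_empty _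
        exact le_of_not_gt (by simpa using this)
      have hτmem : τ ω ∈ {k : ℕ | D ω < L k ω} := by
        rw [hτ ω]; exact Nat.sInf_mem hne
      by_contra hcon
      push_neg at hcon
      have := hk (τ ω) hcon
      exact absurd hτmem (by simp only [Set.mem_setOf_eq, not_lt]; linarith)
    -- pointwise bound
    have hpoint : ∀ ω, (∑' i, (Efam i \ N).indicator (fun _ => (1 : ℝ≥0∞)) ω) ≤
        ENNReal.ofReal (S ω) := by
      intro ω
      by_cases hω : ω ∈ N
      · have : ∀ i, (Efam i \ N).indicator (fun _ => (1 : ℝ≥0∞)) ω = 0 := by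
          intro i
          exact Set.indicator_of_notMem (fun h => h.2 hω) _
        simp [this]
      · have hfg : ∀ i, (Efam i \ N).indicator (fun _ => (1 : ℝ≥0∞)) ω ≤
            (if i < τ ω then ENNReal.ofReal (L i ω) else 0) := by
          intro i
          by_cases hmem : ω ∈ Efam i \ N
          · obtain ⟨h1, h2⟩ := hEsub i ω hmem
            rw [Set.indicator_of_mem hmem, if_pos h1]
            calc (1 : ℝ≥0∞) = ENNReal.ofReal 1 := by simp
              _ ≤ ENNReal.ofReal (L i ω) := ENNReal.ofReal_le_ofReal h2.le
          · rw [Set.indicator_of_notMem hmem]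
            exact zero_le
        calc (∑' i, (Efam i \ N).indicator (fun _ => (1 : ℝ≥0∞)) ω)
            ≤ ∑' i, (if i < τ ω then ENNReal.ofReal (L i ω) else 0) := ENNReal.tsum_le_tsum hfg
          _ = ∑ i ∈ Finset.range (τ ω), (if i < τ ω then ENNReal.ofReal (L i ω) else 0) := by
              refine tsum_eq_sum fun i hi => ?_
              rw [if_neg (by simpa using hi)]
          _ = ∑ i ∈ Finset.range (τ ω), ENNReal.ofReal (L i ω) := by
              refine Finset.sum_congr rfl fun i hi => ?_
              rw [if_pos (Finset.mem_range.mp hi)]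
          _ = ENNReal.ofReal (S ω) := by
              rw [hSdef]
              exact (ENNReal.ofReal_sum_of_nonneg fun i _ => hLnn i ω).symm
    -- integrate
    have hint : (∑' i, P (Efam i)) ≤ ∫⁻ ω, ENNReal.ofReal (S ω) ∂P := by
      have h1 : ∀ i, P (Efam i) = P (Efam i \ N) := fun i => (measure_diff_null hN).symm
      calc (∑' i, P (Efam i)) = ∑' i, P (Efam i \ N) := by simp_rw [h1]
        _ = ∑' i, ∫⁻ ω, (Efam i \ N).indicator (fun _ => (1 : ℝ≥0∞)) ω ∂P := by
            refine tsum_congr fun i => ?_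
            rw [lintegral_indicator_const ((hEmeas i).diff hNmeas)]
            simp
        _ = ∫⁻ ω, ∑' i, (Efam i \ N).indicator (fun _ => (1 : ℝ≥0∞)) ω ∂P := by
            refine (lintegral_tsum fun i => ?_).symm
            exact (measurable_const.indicator ((hEmeas i).diff hNmeas)).aemeasurable
        _ ≤ ∫⁻ ω, ENNReal.ofReal (S ω) ∂P := lintegral_mono hpoint
    -- compute the sum
    have hsum : (∑' i, P (Efam i)) =
        P {ω | t < D ω} * (P (L0 ⁻¹' Ioc 1 t) * (1 - P (L0 ⁻¹' Iic t))⁻¹) := by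
      simp_rw [hPE]
      rw [ENNReal.tsum_mul_left, ENNReal.tsum_mul_left, ENNReal.tsum_geometric]
    have hq : P (L0 ⁻¹' Ioc 1 t) = P {ω | 1 < L0 ω} - P {ω | t < L0 ω} := by
      have hset : L0 ⁻¹' Ioc 1 t = {ω | 1 < L0 ω} \ {ω | t < L0 ω} := by
        ext ω
        simp only [Set.mem_preimage, Set.mem_Ioc, Set.mem_diff, Set.mem_setOf_eq, not_lt]
      rw [hset]
      exact measure_diff (fun ω hω => lt_of_le_of_lt ht hω)
        ((hL0meas measurableSet_Ioi).nullMeasurableSet) (measure_ne_top _ _)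
    have hp : (1 : ℝ≥0∞) - P (L0 ⁻¹' Iic t) = P {ω | t < L0 ω} := by
      rw [hFLone t]
      exact ENNReal.sub_sub_cancel ENNReal.one_ne_top prob_le_one
    have heq : P {ω | t < D ω} * (P {ω | 1 < L0 ω} - P {ω | t < L0 ω}) *
        (P {ω | t < L0 ω})⁻¹ = ∑' i, P (Efam i) := by
      rw [hsum, hq, hp, mul_assoc]
    rw [heq]
    exact hint
  -- conclude : the lower bound is unbounded
  refine ENNReal.eq_top_of_forall_nnreal_le fun r => ?_
  set c0 : ℝ≥0∞ := P {ω | 1 < L0 ω} with hc0def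
  have hc0pos : 0 < c0 := hLsupp 1 zero_le_one
  have hc0ne : c0 ≠ ⊤ := measure_ne_top _ _
  set c2 : ℝ := (c0 / 2).toReal with hc2def
  have hc2pos : 0 < c2 := by
    rw [hc2def]
    refine ENNReal.toReal_pos ?_ ?_
    · simp [ENNReal.div_eq_top, hc0pos.ne', hc0ne]
    · exact (ENNReal.div_lt_top hc0ne (by norm_num)).ne
  have hhalf : ENNReal.ofReal c2 = c0 / 2 := by
    rw [hc2def]
    exact ENNReal.ofReal_toReal (ENNReal.div_lt_top hc0ne (by norm_num)).ne
  set K : ℝ := (r : ℝ) * C / c2 with hKdef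
  -- choose a suitable t
  have hev1 : ∀ᶠ t : ℝ in atTop, (1 : ℝ) ≤ t := eventually_ge_atTop 1
  have hev3 : ∀ᶠ t : ℝ in atTop, K ≤ exp (γ * t) * (P {ω | t < D ω}).toReal :=
    (hheavy γ hγ).eventually_ge_atTop K
  have hev4 : ∀ᶠ t : ℝ in atTop, C * exp (-(γ * t)) < c2 := by
    have h1 : Tendsto (fun t : ℝ => γ * t) atTop atTop :=
      tendsto_id.const_mul_atTop hγ
    have h2 : Tendsto (fun t : ℝ => C * exp (-(γ * t))) atTop (nhds 0) := by
      have := (tendsto_exp_atBot.comp (tendsto_neg_atBot_iff.mpr h1))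
      simpa using this.const_mul C
    exact h2.eventually (gt_mem_nhds hc2pos)
  obtain ⟨t, ⟨ht1, ht2⟩, ht3, ht4⟩ := ((hev1.and hC').and (hev3.and hev4)).exists
  -- estimates at this t
  set pL : ℝ≥0∞ := P {ω | t < L0 ω} with hpLdef
  set pD : ℝ≥0∞ := P {ω | t < D ω} with hpDdef
  set d : ℝ := pD.toReal with hddef
  have hdnn : 0 ≤ d := ENNReal.toReal_nonneg
  have hpD : pD = ENNReal.ofReal d := (ENNReal.ofReal_toReal (measure_ne_top _ _)).symm
  have hpLle : pL ≤ ENNReal.ofReal (C * exp (-(γ * t))) := by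
    have h1 : pL.toReal ≤ C * exp (-(γ * t)) := by
      have hexp : (0 : ℝ) < exp (γ * t) := exp_pos _
      rw [exp_neg]
      rw [mul_comm C (exp (γ * t))⁻¹, ← div_eq_inv_mul]
      rw [le_div_iff₀ hexp]
      calc pL.toReal * exp (γ * t) = exp (γ * t) * pL.toReal := mul_comm _ _
        _ ≤ C := ht2
    calc pL = ENNReal.ofReal pL.toReal := (ENNReal.ofReal_toReal (measure_ne_top _ _)).symm
      _ ≤ _ := ENNReal.ofReal_le_ofReal h1
  have hqge : c0 / 2 ≤ c0 - pL := by
    have h1 : pL ≤ c0 / 2 := by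
      refine hpLle.trans ?_
      rw [← hhalf]
      exact ENNReal.ofReal_le_ofReal ht4.le
    calc c0 / 2 = c0 - c0 / 2 := (ENNReal.sub_half hc0ne).symm
      _ ≤ c0 - pL := tsub_le_tsub_left h1 c0
  have hpinv : ENNReal.ofReal (exp (γ * t) / C) ≤ pL⁻¹ := by
    have h1 : (ENNReal.ofReal (C * exp (-(γ * t))))⁻¹ ≤ pL⁻¹ :=
      ENNReal.inv_le_inv' hpLle
    refine le_trans (le_of_eq ?_) h1
    rw [← ENNReal.ofReal_inv_of_pos (by positivity)]
    congr 1
    rw [exp_neg, mul_inv, inv_inv, div_eq_mul_inv, mul_comm]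
  -- put together
  have hfinal : (r : ℝ≥0∞) ≤ pD * ((c0 - pL) * pL⁻¹) := by
    have step : ENNReal.ofReal d * (ENNReal.ofReal c2 * ENNReal.ofReal (exp (γ * t) / C)) ≤
        pD * ((c0 - pL) * pL⁻¹) := by
      rw [← hpD]
      refine mul_le_mul' le_rfl (mul_le_mul' ?_ hpinv)
      rw [hhalf]; exact hqge
    refine le_trans ?_ step
    rw [← ENNReal.ofReal_mul hc2pos.le, ← ENNReal.ofReal_mul hdnn]
    have hreal : (r : ℝ) ≤ d * (c2 * (exp (γ * t) / C)) := by
      have h1 : (r : ℝ) * C / c2 ≤ exp (γ * t) * d := ht3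
      have h2 : (r : ℝ) * C ≤ exp (γ * t) * d * c2 := by
        rw [div_le_iff₀ hc2pos] at h1
        linarith
      rw [← sub_nonneg]
      have h3 : d * (c2 * (exp (γ * t) / C)) - (r : ℝ) =
          (exp (γ * t) * d * c2 - (r : ℝ) * C) / C := by
        field_simp
      rw [h3]
      exact div_nonneg (by linarith) hCpos.le
    calc (r : ℝ≥0∞) = ENNReal.ofReal (r : ℝ) := (ENNReal.ofReal_coe_nnreal (p := r)).symm
      _ ≤ ENNReal.ofReal (d * (c2 * (exp (γ * t) / C))) := ENNReal.ofReal_le_ofReal hreal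
  refine hfinal.trans ?_
  rw [← mul_assoc]
  exact main t ht1
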